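/- Let $a, b, c$ be complex numbers and let $M_n(a,b,c)$ be the $n \times n$ matrix with entries $m'_{ij} = \prod_{s=1}^{i-1} \frac{a(s+j)+b}{s+j+c}$ for $1 \le i,j \le n$ (where the empty product for $i=1$ equals $1$). Then, assuming all denominators are nonzero, $\det M_n(a,b,c) = \frac{(n-1)!\,(ac-b)^{n-1}}{\prod_{i=1}^{n-1}(i+1+c)(i+2+c)} \cdot \det M_{n-1}(a, a+b, c+2)$. -/

import Mathlib

open Finset

/-- The matrix `M n a b c` with `(i,j)` entry (1-based) `∏_{s=1}^{i-1} (a(s+j)+b)/(s+j+c)`. -/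
noncomputable def Mmat (n : ℕ) (a b c : ℂ) : Matrix (Fin n) (Fin n) ℂ :=
  Matrix.of fun i j =>
    ∏ s ∈ Finset.Icc 1 (i : ℕ), (a * ((s : ℂ) + ((j : ℕ) + 1)) + b) / ((s : ℂ) + ((j : ℕ) + 1) + c)

lemma prod_Icc_one_bot {M : Type*} [CommMonoid M] (g : ℕ → M) (t : ℕ) :
    ∏ s ∈ Icc 1 (t+1), g s = g 1 * ∏ s ∈ Icc 1 t, g (s+1) := by
  induction t with
  | zero => simp
  | succ t ih =>
    rw [Finset.prod_Icc_succ_top (by omega), ih,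
      Finset.prod_Icc_succ_top (by omega : 1 ≤ t + 1), mul_assoc]

lemma claimA (a b c x : ℂ) (k : ℕ) (hv : ((k:ℂ)+1)+x+c ≠ 0) :
    (∏ s ∈ Icc 1 (k+1), (a*((s:ℂ)+x)+b)/((s:ℂ)+x+c))
      = (b - a*c)/(((k:ℂ)+1)+x+c) * (∏ s ∈ Icc 1 k, (a*((s:ℂ)+x)+b)/((s:ℂ)+x+c))
        + a * ∏ s ∈ Icc 1 k, (a*((s:ℂ)+x)+b)/((s:ℂ)+x+c) := by
  rw [Finset.prod_Icc_succ_top (by omega : 1 ≤ k+1)]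
  set P := ∏ s ∈ Icc 1 k, (a*((s:ℂ)+x)+b)/((s:ℂ)+x+c) with hP
  push_cast
  field_simp
  ring

set_option maxHeartbeats 1000000 in
lemma core_identity (a b c x kc A C : ℂ) (h1 : (1:ℂ)+x+c ≠ 0) (h2 : (2:ℂ)+x+c ≠ 0)
    (hx1 : x+1+c ≠ 0) (hx2 : x+2+c ≠ 0)
    (hk1 : kc+2+x+c ≠ 0) (hk2 : kc+3+x+c ≠ 0)
    (hk1' : kc+1+1+x+c ≠ 0) (hk2' : kc+1+1+(x+1)+c ≠ 0)
    (hC : C ≠ 0) :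
    (b-a*c)/(kc+1+1+x+c) * ((a*(1+x)+b)/(1+x+c) * (A * (kc+2+x+c) / ((2+x+c)*C)))
    - (b-a*c)/(kc+1+1+(x+1)+c) * ((A * (kc+2+x+c) / ((2+x+c)*C)) * ((a*(kc+2+x)+b)/(kc+2+x+c)))
    = (b-a*c)/((x+1+c)*(x+2+c)) * ((kc+1+1) * (A/C * ((a*(kc+1+x)+(a+b))/(kc+3+x+c)))
        - (kc+1)*a*(A/C)) := by
  simp only [div_mul_eq_mul_div, mul_div_assoc', div_div]
  rw [div_sub_div _ _
      (mul_ne_zero hk1' (mul_ne_zero h1 (mul_ne_zero h2 hC)))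
      (mul_ne_zero hk2' (mul_ne_zero (mul_ne_zero h2 hC) hk1)),
    div_sub_div _ _ (mul_ne_zero hC hk2) hC]
  simp only [mul_div_assoc', div_div]
  rw [div_eq_div_iff
      (mul_ne_zero (mul_ne_zero hk1' (mul_ne_zero h1 (mul_ne_zero h2 hC)))
        (mul_ne_zero hk2' (mul_ne_zero (mul_ne_zero h2 hC) hk1)))
      (mul_ne_zero (mul_ne_zero (mul_ne_zero hC hk2) hC) (mul_ne_zero hx1 hx2))]
  ring

set_option maxHeartbeats 1000000 in
lemma claimB (a b c x : ℂ) (k : ℕ)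
    (hv : ∀ s : ℕ, 1 ≤ s → s ≤ k + 2 → (s:ℂ) + x + c ≠ 0) :
    (b - a*c)/(((k:ℂ)+1)+x+c) * (∏ s ∈ Icc 1 k, (a*((s:ℂ)+x)+b)/((s:ℂ)+x+c))
      - (b - a*c)/(((k:ℂ)+1)+(x+1)+c) * (∏ s ∈ Icc 1 k, (a*((s:ℂ)+(x+1))+b)/((s:ℂ)+(x+1)+c))
    = (b - a*c)/((x+1+c)*(x+2+c)) *
        (((k:ℂ)+1) * (∏ s ∈ Icc 1 k, (a*((s:ℂ)+x)+(a+b))/((s:ℂ)+x+(c+2)))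
          - (k:ℂ) * a * (∏ s ∈ Icc 1 (k-1), (a*((s:ℂ)+x)+(a+b))/((s:ℂ)+x+(c+2)))) := by
  have h1 : (1:ℂ) + x + c ≠ 0 := by simpa using hv 1 (by omega) (by omega)
  have h2 : (2:ℂ) + x + c ≠ 0 := by simpa using hv 2 (by omega) (by omega)
  have hx1 : x + 1 + c ≠ 0 := fun h => h1 (by linear_combination h)
  have hx2 : x + 2 + c ≠ 0 := fun h => h2 (by linear_combination h)
  cases k with
  | zero =>
    have e0 : Icc 1 0 = (∅ : Finset ℕ) := by simp
    simp only [Nat.cast_zero, Nat.zero_sub, e0, prod_empty, mul_one, zero_add, zero_mul,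
      sub_zero, one_mul]
    have h2' : (1:ℂ)+(x+1)+c ≠ 0 := fun h => h2 (by linear_combination h)
    rw [div_sub_div _ _ h1 h2', div_eq_div_iff (mul_ne_zero h1 h2') (mul_ne_zero hx1 hx2)]
    ring
  | succ k' =>
    have hk1 : ((k':ℂ)+2) + x + c ≠ 0 := by
      have h := hv (k'+2) (by omega) (by omega)
      intro heq; apply h; push_cast; linear_combination heq
    have hk2 : ((k':ℂ)+3) + x + c ≠ 0 := by
      have h := hv (k'+3) (by omega) (by omega)
      intro heq; apply h; push_cast; linear_combination heq
    have hk1' : (k':ℂ)+1+1+x+c ≠ 0 := fun h => hk1 (by linear_combination h)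
    have hk2' : (k':ℂ)+1+1+(x+1)+c ≠ 0 := fun h => hk2 (by linear_combination h)
    set A := ∏ s ∈ Icc 1 k', (a*((s:ℂ)+x)+(a+b)) with hA
    set Bq := ∏ s ∈ Icc 1 k', ((s:ℂ)+(x+1)+c) with hBq
    set Cq := ∏ s ∈ Icc 1 k', ((s:ℂ)+x+(c+2)) with hCq
    have e1 : (∏ s ∈ Icc 1 (k'+1), (a*((s:ℂ)+x)+b)/((s:ℂ)+x+c))
        = (a*(1+x)+b)/(1+x+c) * (A / Bq) := by
      rw [prod_Icc_one_bot (fun s => (a*((s:ℂ)+x)+b)/((s:ℂ)+x+c)) k', hA, hBq,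
        ← Finset.prod_div_distrib]
      congr 1
      · push_cast; ring
      · exact Finset.prod_congr rfl fun s _ => by push_cast; ring
    have e2 : (∏ s ∈ Icc 1 (k'+1), (a*((s:ℂ)+(x+1))+b)/((s:ℂ)+(x+1)+c))
        = (A / Bq) * ((a*((k':ℂ)+2+x)+b)/(((k':ℂ)+2)+x+c)) := by
      rw [Finset.prod_Icc_succ_top (by omega : 1 ≤ k'+1), hA, hBq, ← Finset.prod_div_distrib]
      congr 1
      · exact Finset.prod_congr rfl fun s _ => by push_cast; ring
      · push_cast; ring
    have e3 : (∏ s ∈ Icc 1 (k'+1), (a*((s:ℂ)+x)+(a+b))/((s:ℂ)+x+(c+2)))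
        = (A / Cq) * ((a*((k':ℂ)+1+x)+(a+b))/(((k':ℂ)+3)+x+c)) := by
      rw [Finset.prod_Icc_succ_top (by omega : 1 ≤ k'+1), hA, hCq, ← Finset.prod_div_distrib]
      congr 1
      · push_cast; ring
    have e4 : (∏ s ∈ Icc 1 (k'+1-1), (a*((s:ℂ)+x)+(a+b))/((s:ℂ)+x+(c+2))) = A / Cq := by
      simp only [Nat.add_sub_cancel]
      rw [hA, hCq, ← Finset.prod_div_distrib]
    have hBne : Bq ≠ 0 := by
      rw [hBq]
      apply Finset.prod_ne_zero_iff.2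
      intro s hs
      simp only [mem_Icc] at hs
      have h := hv (s+1) (by omega) (by omega)
      intro heq; apply h; push_cast; linear_combination heq
    have hCne : Cq ≠ 0 := by
      rw [hCq]
      apply Finset.prod_ne_zero_iff.2
      intro s hs
      simp only [mem_Icc] at hs
      have h := hv (s+2) (by omega) (by omega)
      intro heq; apply h; push_cast; linear_combination heq
    have hBC : Bq * (((k':ℂ)+2)+x+c) = (2+x+c) * Cq := by
      have t1 : (∏ s ∈ Icc 1 (k'+1), ((s:ℂ)+(x+1)+c)) = Bq * (((k':ℂ)+2)+x+c) := by
        rw [Finset.prod_Icc_succ_top (by omega : 1 ≤ k'+1), hBq]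
        congr 1
        push_cast; ring
      have t2 : (∏ s ∈ Icc 1 (k'+1), ((s:ℂ)+(x+1)+c)) = (2+x+c) * Cq := by
        rw [prod_Icc_one_bot (fun s => ((s:ℂ)+(x+1)+c)) k', hCq]
        congr 1
        · push_cast; ring
        · exact Finset.prod_congr rfl fun s _ => by push_cast; ring
      rw [← t1, t2]
    have hAB : A / Bq = A * (((k':ℂ)+2)+x+c) / ((2+x+c) * Cq) := by
      rw [div_eq_div_iff hBne (mul_ne_zero h2 hCne)]
      linear_combination (-A) * hBC
    rw [e1, e2, e3, e4, hAB]
    push_cast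
    linear_combination core_identity a b c x (k':ℂ) A Cq h1 h2 hx1 hx2 hk1 hk2
      (by exact hk1') (by exact hk2') hCne

/-- Row-operation matrix: subtract `a` times the previous row. -/
def Emat (m : ℕ) (a : ℂ) : Matrix (Fin (m+1)) (Fin (m+1)) ℂ :=
  Matrix.of fun i t => if i = t then 1 else if (t:ℕ)+1 = (i:ℕ) then -a else 0

/-- The matrix after the row operations. -/
noncomputable def Kmat (m : ℕ) (a b c : ℂ) : Matrix (Fin (m+1)) (Fin (m+1)) ℂ :=
  Matrix.of fun i j =>
    if (i:ℕ) = 0 then 1 else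
      (b - a*c)/(((i:ℕ):ℂ) + (((j:ℕ):ℂ)+1) + c) *
        ∏ s ∈ Icc 1 ((i:ℕ)-1), (a*((s:ℂ)+(((j:ℕ):ℂ)+1))+b)/((s:ℂ)+(((j:ℕ):ℂ)+1)+c)

/-- Column-operation matrix: subtract the next column. -/
def Ucmat (m : ℕ) : Matrix (Fin (m+1)) (Fin (m+1)) ℂ :=
  Matrix.of fun t j => if t = j then 1 else if (t:ℕ) = (j:ℕ)+1 then -1 else 0

/-- Row mixing matrix for the minor. -/
def Tmat (m : ℕ) (a : ℂ) : Matrix (Fin m) (Fin m) ℂ :=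
  Matrix.of fun k t =>
    if k = t then ((k:ℕ):ℂ)+1 else if (t:ℕ)+1 = (k:ℕ) then -(((k:ℕ):ℂ))*a else 0

/-- Column scaling matrix. -/
noncomputable def Dmat (m : ℕ) (w c : ℂ) : Matrix (Fin m) (Fin m) ℂ :=
  Matrix.diagonal fun j => w / (((((j:ℕ):ℂ))+2+c) * ((((j:ℕ):ℂ))+3+c))

lemma row_sum {n : ℕ} (i : Fin n) (dc sc : ℂ) (f : Fin n → ℂ) :
    (∑ t : Fin n, (if i = t then dc else if (t:ℕ)+1 = (i:ℕ) then sc else 0) * f t)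
      = dc * f i + (if h : (i:ℕ) = 0 then 0 else sc * f ⟨(i:ℕ)-1, by omega⟩) := by
  by_cases h0 : (i:ℕ) = 0
  · rw [dif_pos h0, add_zero, Finset.sum_eq_single i]
    · rw [if_pos rfl]
    · intro t _ hti
      rw [if_neg (fun h => hti h.symm), if_neg (by omega), zero_mul]
    · intro h; exact absurd (Finset.mem_univ i) h
  · rw [dif_neg h0]
    have hlt : (i:ℕ) - 1 < n := by omega
    have hqi : (⟨(i:ℕ)-1, hlt⟩ : Fin n) ≠ i := by
      intro h
      have := congrArg Fin.val h
      simp only at this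
      omega
    rw [Finset.sum_eq_add_of_mem i ⟨(i:ℕ)-1, hlt⟩ (Finset.mem_univ _) (Finset.mem_univ _)
      (Ne.symm hqi) ?_]
    · rw [if_pos rfl, if_neg (Ne.symm hqi), if_pos (show (i:ℕ)-1+1 = (i:ℕ) by omega)]
    · intro t _ ht
      rw [if_neg (fun h => ht.1 h.symm), if_neg ?_, zero_mul]
      intro h
      exact ht.2 (Fin.ext (show (t:ℕ) = (i:ℕ)-1 by omega))

lemma col_sum {n : ℕ} (j : Fin n) (f : Fin n → ℂ) :
    (∑ t : Fin n, f t * (if t = j then (1:ℂ) else if (t:ℕ) = (j:ℕ)+1 then -1 else 0))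
      = f j - (if h : (j:ℕ)+1 < n then f ⟨(j:ℕ)+1, h⟩ else 0) := by
  by_cases h0 : (j:ℕ)+1 < n
  · rw [dif_pos h0]
    have hqj : (⟨(j:ℕ)+1, h0⟩ : Fin n) ≠ j := by
      intro h
      have := congrArg Fin.val h
      simp only at this
      omega
    rw [Finset.sum_eq_add_of_mem j ⟨(j:ℕ)+1, h0⟩ (Finset.mem_univ _) (Finset.mem_univ _)
      (Ne.symm hqj) ?_]
    · rw [if_pos rfl, if_neg hqj, if_pos (show (j:ℕ)+1 = (j:ℕ)+1 from rfl)]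
      ring
    · intro t _ ht
      rw [if_neg ht.1, if_neg ?_, mul_zero]
      intro h
      exact ht.2 (Fin.ext (show (t:ℕ) = (j:ℕ)+1 from h))
  · rw [dif_neg h0, sub_zero, Finset.sum_eq_single j]
    · rw [if_pos rfl, mul_one]
    · intro t _ hti
      rw [if_neg hti, if_neg (by omega), mul_zero]
    · intro h; exact absurd (Finset.mem_univ j) h

lemma detE (m : ℕ) (a : ℂ) : (Emat m a).det = 1 := by
  have h : (Emat m a).BlockTriangular OrderDual.toDual := by
    intro i j hij
    have hlt : i < j := hij
    simp only [Emat, Matrix.of_apply]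
    rw [if_neg (by exact Fin.ne_of_lt hlt), if_neg (by omega)]
  rw [Matrix.det_of_lowerTriangular _ h]
  simp [Emat]

lemma detUc (m : ℕ) : (Ucmat m).det = 1 := by
  have h : (Ucmat m).BlockTriangular OrderDual.toDual := by
    intro i j hij
    have hlt : i < j := hij
    simp only [Ucmat, Matrix.of_apply]
    rw [if_neg (by exact Fin.ne_of_lt hlt), if_neg (by omega)]
  rw [Matrix.det_of_lowerTriangular _ h]
  simp [Ucmat]

lemma detT (m : ℕ) (a : ℂ) : (Tmat m a).det = (m.factorial : ℂ) := by
  have h : (Tmat m a).BlockTriangular OrderDual.toDual := by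
    intro i j hij
    have hlt : i < j := hij
    simp only [Tmat, Matrix.of_apply]
    rw [if_neg (by exact Fin.ne_of_lt hlt), if_neg (by omega)]
  rw [Matrix.det_of_lowerTriangular _ h]
  have : ∀ k : Fin m, (Tmat m a) k k = ((k:ℕ):ℂ)+1 := by
    intro k; simp [Tmat]
  rw [Finset.prod_congr rfl fun k _ => this k]
  rw [Fin.prod_univ_eq_prod_range (fun k => ((k:ℂ)+1)) m]
  rw [← Finset.prod_range_add_one_eq_factorial m]
  push_cast
  rfl

theorem stmt0 (n : ℕ) (hn : 1 ≤ n) (a b c : ℂ)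
    (hden : ∀ s j : ℕ, 1 ≤ s → s ≤ n - 1 → 1 ≤ j → j ≤ n → (s : ℂ) + j + c ≠ 0)
    (hden2 : ∀ i : ℕ, 1 ≤ i → i ≤ n - 1 → ((i : ℂ) + 1 + c ≠ 0 ∧ (i : ℂ) + 2 + c ≠ 0)) :
    (Mmat n a b c).det =
      ((n - 1).factorial : ℂ) * (a * c - b) ^ (n - 1) /
          (∏ i ∈ Finset.Icc 1 (n - 1), (((i : ℂ) + 1 + c) * ((i : ℂ) + 2 + c))) *
        (Mmat (n - 1) a (a + b) (c + 2)).det := by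
  obtain ⟨m, rfl⟩ : ∃ m, n = m + 1 := ⟨n - 1, by omega⟩
  clear hn
  simp only [Nat.add_sub_cancel] at hden hden2
  show (Mmat (m+1) a b c).det =
      ((m).factorial : ℂ) * (a * c - b) ^ m /
          (∏ i ∈ Finset.Icc 1 m, (((i : ℂ) + 1 + c) * ((i : ℂ) + 2 + c))) *
        (Mmat m a (a + b) (c + 2)).det
  -- uniform nonvanishing of denominators
  have hvu : ∀ u : ℕ, 2 ≤ u → u ≤ 2*m+1 → (u:ℂ) + c ≠ 0 := by
    intro u h2 hle
    rcases le_or_gt u (m+1) with h | h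
    · have hd := hden 1 (u-1) (by omega) (by omega : 1 ≤ m) (by omega) (by omega)
      intro h0; apply hd
      rw [Nat.cast_sub (by omega : 1 ≤ u)]
      push_cast
      linear_combination h0
    · have hd := hden (u-(m+1)) (m+1) (by omega) (by omega) (by omega) (le_refl _)
      intro h0; apply hd
      rw [Nat.cast_sub (by omega : m+1 ≤ u)]
      push_cast
      linear_combination h0
  -- Step 1 : Kmat = Emat * Mmat
  have hKE : Kmat m a b c = Emat m a * Mmat (m+1) a b c := by
    ext i j
    rw [Matrix.mul_apply]
    have hs : (∑ t, Emat m a i t * Mmat (m+1) a b c t j)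
        = 1 * Mmat (m+1) a b c i j
          + (if h : (i:ℕ) = 0 then 0
             else (-a) * Mmat (m+1) a b c ⟨(i:ℕ)-1, by omega⟩ j) :=
      row_sum i 1 (-a) (fun t => Mmat (m+1) a b c t j)
    rw [hs]
    by_cases h0 : (i:ℕ) = 0
    · rw [dif_pos h0, add_zero, one_mul]
      simp [Kmat, Mmat, h0, (Fin.ext (by simp [h0]) : i = 0)]
    · rw [dif_neg h0, one_mul]
      obtain ⟨p, hp⟩ : ∃ p, (i:ℕ) = p+1 := ⟨(i:ℕ)-1, by omega⟩
      have hnz : ((p:ℂ)+1)+(((j:ℕ):ℂ)+1)+c ≠ 0 := by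
        intro h
        apply hvu (p+1+(j+1)) (by omega) (by omega)
        push_cast
        linear_combination h
      have hA := claimA a b c (((j:ℕ):ℂ)+1) p hnz
      simp only [Kmat, Mmat, Matrix.of_apply, h0, if_neg h0, hp, Nat.add_sub_cancel]
      push_cast
      linear_combination -hA
  -- Step 2 : top row of K * Uc
  have hVtop : ∀ j : Fin (m+1), (Kmat m a b c * Ucmat m) 0 j
      = if j = Fin.last m then 1 else 0 := by
    intro j
    rw [Matrix.mul_apply]
    have hs : (∑ t, Kmat m a b c 0 t * Ucmat m t j)
        = Kmat m a b c 0 j - (if h : (j:ℕ)+1 < m+1 then Kmat m a b c 0 ⟨(j:ℕ)+1, h⟩ else 0) :=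
      col_sum j (fun t => Kmat m a b c 0 t)
    rw [hs]
    have hK0 : ∀ t : Fin (m+1), Kmat m a b c 0 t = 1 := by
      intro t; simp [Kmat]
    rw [hK0 j]
    by_cases hj : j = Fin.last m
    · rw [dif_neg (by simp [hj]), sub_zero, if_pos hj]
    · rw [dif_pos (by have := Fin.val_lt_last hj; omega), hK0, if_neg hj]
      ring
  -- Step 3 : the minor identity
  have hW : (Kmat m a b c * Ucmat m).submatrix Fin.succ Fin.castSucc
      = Tmat m a * (Mmat m a (a+b) (c+2) * Dmat m (b-a*c) c) := by
    ext k j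
    have hsL : ((Kmat m a b c * Ucmat m).submatrix Fin.succ Fin.castSucc) k j
        = Kmat m a b c k.succ j.castSucc
          - (if h : ((j.castSucc :ℕ))+1 < m+1
             then Kmat m a b c k.succ ⟨(j.castSucc:ℕ)+1, h⟩ else 0) := by
      rw [Matrix.submatrix_apply, Matrix.mul_apply]
      exact col_sum j.castSucc (fun t => Kmat m a b c k.succ t)
    have hsR : (Tmat m a * (Mmat m a (a+b) (c+2) * Dmat m (b-a*c) c)) k j
        = (((k:ℕ):ℂ)+1) * ((Mmat m a (a+b) (c+2) * Dmat m (b-a*c) c) k j)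
          + (if h : (k:ℕ) = 0 then 0
             else (-(((k:ℕ):ℂ))*a) *
               ((Mmat m a (a+b) (c+2) * Dmat m (b-a*c) c) ⟨(k:ℕ)-1, by omega⟩ j)) := by
      rw [Matrix.mul_apply]
      exact row_sum k (((k:ℕ):ℂ)+1) (-(((k:ℕ):ℂ))*a)
        (fun t => (Mmat m a (a+b) (c+2) * Dmat m (b-a*c) c) t j)
    rw [hsL, hsR]
    have hHD : ∀ t : Fin m, (Mmat m a (a+b) (c+2) * Dmat m (b-a*c) c) t j
        = (∏ s ∈ Icc 1 (t:ℕ), (a*((s:ℂ)+(((j:ℕ):ℂ)+1))+(a+b))/((s:ℂ)+(((j:ℕ):ℂ)+1)+(c+2)))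
          * ((b-a*c) / (((((j:ℕ):ℂ))+2+c) * ((((j:ℕ):ℂ))+3+c))) := by
      intro t
      simp only [Dmat, Matrix.mul_diagonal, Mmat, Matrix.of_apply]
    rw [hHD]
    set x : ℂ := ((j:ℕ):ℂ)+1 with hx
    have hbv : ∀ s : ℕ, 1 ≤ s → s ≤ (k:ℕ) + 2 → (s:ℂ) + x + c ≠ 0 := by
      intro s h1 h2
      intro h
      apply hvu (s + ((j:ℕ)+1)) (by omega) (by
        have hk' : (k:ℕ) < m := k.isLt
        have hj' : (j:ℕ) < m := j.isLt
        omega)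
      push_cast
      rw [hx] at h
      linear_combination h
    have hB := claimB a b c x (k:ℕ) hbv
    have hd1 : (if h : ((j.castSucc:ℕ))+1 < m+1
        then Kmat m a b c k.succ ⟨(j.castSucc:ℕ)+1, h⟩ else 0)
        = Kmat m a b c k.succ ⟨(j:ℕ)+1, by have := j.isLt; omega⟩ := by
      rw [dif_pos (by have := j.isLt; simp only [Fin.coe_castSucc]; omega)]
      rfl
    rw [hd1]
    by_cases hk0 : (k:ℕ) = 0
    · rw [dif_pos hk0]
      simp only [Kmat, Matrix.of_apply, Fin.val_succ, Fin.coe_castSucc, Nat.add_sub_cancel]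
      rw [if_neg (by omega), if_neg (by omega)]
      push_cast
      rw [hk0] at hB ⊢
      push_cast at hB
      linear_combination hB
    · rw [dif_neg hk0, hHD]
      simp only [Kmat, Matrix.of_apply, Fin.val_succ, Fin.coe_castSucc, Nat.add_sub_cancel]
      rw [if_neg (by omega), if_neg (by omega)]
      push_cast
      linear_combination hB
  -- determinants
  have hdetD : (Dmat m (b-a*c) c).det
      = ∏ j : Fin m, ((b-a*c) / (((((j:ℕ):ℂ))+2+c) * ((((j:ℕ):ℂ))+3+c))) := by
    rw [Dmat, Matrix.det_diagonal]
  have hdetV : (Kmat m a b c * Ucmat m).det = (Mmat (m+1) a b c).det := by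
    rw [Matrix.det_mul, detUc, mul_one, hKE, Matrix.det_mul, detE, one_mul]
  have hsplit : (Kmat m a b c * Ucmat m).det
      = (-1:ℂ)^m * ((Kmat m a b c * Ucmat m).submatrix Fin.succ Fin.castSucc).det := by
    rw [Matrix.det_succ_row_zero]
    rw [Finset.sum_eq_single (Fin.last m)]
    · rw [hVtop, if_pos rfl, Fin.succAbove_last, Fin.val_last, mul_one]
    · intro t _ ht
      rw [hVtop, if_neg ht, mul_zero, zero_mul]
    · intro h; exact absurd (Finset.mem_univ _) h
  have hfinal : (Mmat (m+1) a b c).det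
      = (-1:ℂ)^m * ((m.factorial : ℂ) *
          ((Mmat m a (a+b) (c+2)).det *
            (∏ j : Fin m, ((b-a*c) / (((((j:ℕ):ℂ))+2+c) * ((((j:ℕ):ℂ))+3+c)))))) := by
    rw [← hdetV, hsplit, hW, Matrix.det_mul, Matrix.det_mul, detT, hdetD]
  rw [hfinal]
  -- final scalar arithmetic
  have hP : (∏ j : Fin m, ((b-a*c) / (((((j:ℕ):ℂ))+2+c) * ((((j:ℕ):ℂ))+3+c))))
      = (b-a*c)^m / ∏ i ∈ Finset.Icc 1 m, (((i : ℂ) + 1 + c) * ((i : ℂ) + 2 + c)) := by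
    rw [Finset.prod_div_distrib, Finset.prod_const, Finset.card_univ, Fintype.card_fin]
    congr 1
    rw [Fin.prod_univ_eq_prod_range (fun j => (((j:ℂ))+2+c) * (((j:ℂ))+3+c)) m]
    rw [← Finset.Ico_add_one_right_eq_Icc, Finset.prod_Ico_eq_prod_range]
    apply Finset.prod_congr (by norm_num)
    intro s _
    push_cast
    ring
  rw [hP]
  have hsign : (a*c-b)^m = (-1:ℂ)^m * (b-a*c)^m := by
    rw [← neg_pow]
    congr 1
    ring
  rw [hsign]
  ring
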